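/- (Continuity of the field-line angular velocity ω across a shock into a flowing disk region.) Let n, t, e_φ be vectors in ℝ³ with ‖e_φ‖ = 1, n · e_φ = 0 and t = n × e_φ. Let B, B̂ ∈ ℝ³ and χ, χ̂, w, ŵ ∈ ℝ. Suppose v = χ • B + w • e_φ and v̂ = χ̂ • B̂ + ŵ • e_φ, that (v × B) · t = (v̂ × B̂) · t, and that B · n = B̂ · n with B · n ≠ 0. Then ŵ = w; i.e., the streamline constant ω is continuous across the shock. -/

import Mathlib

open Matrix InnerProductSpace

/-- The cross product on `ℝ³`, viewed as `EuclideanSpace ℝ (Fin 3)`. -/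
noncomputable def cross3 (x y : EuclideanSpace ℝ (Fin 3)) : EuclideanSpace ℝ (Fin 3) :=
  WithLp.toLp 2 (crossProduct x y)

lemma key_expand (n ephi B : EuclideanSpace ℝ (Fin 3)) (χ w : ℝ) :
    ⟪cross3 (χ • B + w • ephi) B, cross3 n ephi⟫_ℝ =
      w * (⟪n, ephi⟫_ℝ * ⟪B, ephi⟫_ℝ - ⟪ephi, ephi⟫_ℝ * ⟪B, n⟫_ℝ) := by
  simp [cross3, crossProduct, PiLp.inner_apply, Fin.sum_univ_three, RCLike.inner_apply, EuclideanSpace.real_norm_sq_eq]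
  ring

/-- Continuity of the field-line angular velocity `ω` across a shock into a flowing
(wind-compressed) disk region: with velocities of the field-aligned-plus-corotation
form `v = χ B + w e_φ` on both sides of the shock, the tangential electric-field jump
condition and continuity of the nonzero normal magnetic field component force the
streamline constant `w = ω r sinθ` to be continuous across the shock. -/
theorem omega_continuous_across_shock
    (n t ephi B Bhat v vhat : EuclideanSpace ℝ (Fin 3))
    (χ χhat w what : ℝ)
    (hnorm : ‖ephi‖ = 1)
    (hperp : ⟪n, ephi⟫_ℝ = 0)
    (ht : t = cross3 n ephi)
    (hv : v = χ • B + w • ephi)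
    (hvhat : vhat = χhat • Bhat + what • ephi)
    (hjump : ⟪cross3 v B, t⟫_ℝ = ⟪cross3 vhat Bhat, t⟫_ℝ)
    (hBn : ⟪B, n⟫_ℝ = ⟪Bhat, n⟫_ℝ)
    (hBn0 : ⟪B, n⟫_ℝ ≠ 0) :
    what = w := by
  have hE : ⟪ephi, ephi⟫_ℝ = 1 := by
    rw [real_inner_self_eq_norm_sq, hnorm]; norm_num
  rw [hv, hvhat, ht, key_expand, key_expand, hperp, hE, ← hBn] at hjump
  have : what * ⟪B, n⟫_ℝ = w * ⟪B, n⟫_ℝ := by linarith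
  exact mul_right_cancel₀ hBn0 this
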